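/- arXiv:1801.05048 — 3 statements merged into one kernel-verified Lean document; each statement's English description precedes it below -/
import Mathlib

section
/- Let (Ω, 𝒜, ℙ) be a probability space, E a standard Borel space, Q an atomless probability measure on E, π₁ ∈ [0,1], and let q̃ : Ω → (measures on E) be measurable with q̃(ω) a probability measure for every ω. Assume that for all measurable sets A, B ⊆ E one has ∫_Ω q̃(ω)(A) · q̃(ω)(B) dℙ(ω) = π₁ · Q(A ∩ B) + (1 − π₁) · Q(A) · Q(B). Then ∫_Ω (q̃(ω) ⊗ q̃(ω))(Δ_E) dℙ(ω) = π₁, where Δ_E = {(x,x) : x ∈ E} is the diagonal of E × E (which is measurable since E is standard Borel). In other words, two draws that are conditionally i.i.d. from q̃ coincide with probability exactly π₁. -/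
open MeasureTheory Set Filter
open scoped ENNReal Topology

private lemma floor_half_aux (x : ℝ) : ⌊x / 2⌋ = ⌊x⌋ / 2 := by
  have h := Int.mul_ediv_add_emod ⌊x⌋ 2
  have h0 : (0:ℤ) ≤ ⌊x⌋ % 2 := Int.emod_nonneg _ two_ne_zero
  have h1 : ⌊x⌋ % 2 < 2 := Int.emod_lt_of_pos _ two_pos
  have hx := Int.floor_le x
  have hx' := Int.lt_floor_add_one x
  rw [Int.floor_eq_iff]
  constructor
  · have h2 : ((2 * (⌊x⌋/2) : ℤ) : ℝ) ≤ (⌊x⌋ : ℝ) := by exact_mod_cast (by omega : (2 * (⌊x⌋/2) : ℤ) ≤ ⌊x⌋)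
    push_cast at h2 ⊢
    linarith
  · have h2 : ((⌊x⌋ : ℤ) : ℝ) + 1 ≤ 2 * ((⌊x⌋/2 : ℤ) : ℝ) + 2 := by
      exact_mod_cast (by omega : ⌊x⌋ + 1 ≤ 2 * (⌊x⌋/2) + 2)
    push_cast at h2 ⊢
    linarith

/-- Proposition 1 (abstract form): if a random probability measure `q̃` on a standard
Borel space with atomless "mean-square" structure satisfies
`E[q̃(A) q̃(B)] = π₁ Q(A ∩ B) + (1 − π₁) Q(A) Q(B)` for all measurable `A, B`,
then two conditionally i.i.d. draws from `q̃` coincide with probability `π₁`: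
`E[(q̃ ⊗ q̃)(Δ)] = π₁` for the diagonal `Δ`. -/
theorem prob_diagonal_eq_pi_one
    {Ω : Type*} [MeasurableSpace Ω] (ℙ : Measure Ω) [IsProbabilityMeasure ℙ]
    {E : Type*} [MeasurableSpace E] [StandardBorelSpace E]
    (Q : Measure E) [IsProbabilityMeasure Q] [NullSingletonClass Q]
    (π₁ : ℝ≥0∞) (hπ : π₁ ≤ 1)
    (q : Ω → Measure E) (hq : Measurable q)
    (hqprob : ∀ ω, IsProbabilityMeasure (q ω))
    (hmom : ∀ A B : Set E, MeasurableSet A → MeasurableSet B →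
      ∫⁻ ω, q ω A * q ω B ∂ℙ = π₁ * Q (A ∩ B) + (1 - π₁) * (Q A * Q B)) :
    ∫⁻ ω, (q ω).prod (q ω) {p : E × E | p.1 = p.2} ∂ℙ = π₁ := by
  obtain ⟨f, hf⟩ := exists_measurableEmbedding_real E
  -- dyadic partition at level n
  set A : ℕ → ℤ → Set E := fun n k => {x | ⌊f x * 2 ^ n⌋ = k} with hAdef
  have hfm : ∀ n : ℕ, Measurable fun x => ⌊f x * 2 ^ n⌋ :=
    fun n => (hf.measurable.mul_const _).floor
  have hAmeas : ∀ n k, MeasurableSet (A n k) := fun n k =>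
    (hfm n) (measurableSet_singleton k)
  have hAdisj : ∀ n, Pairwise (Function.onFun Disjoint fun k => A n k) := by
    intro n k k' hkk'
    rw [Function.onFun, Set.disjoint_left]
    rintro x (hx : _ = k) (hx' : _ = k')
    exact hkk' (hx ▸ hx')
  have hAcover : ∀ n, (⋃ k, A n k) = univ := by
    intro n
    ext x
    simp only [mem_iUnion, mem_univ, iff_true]
    exact ⟨⌊f x * 2 ^ n⌋, rfl⟩
  -- the approximating sets
  set S : ℕ → Set (E × E) := fun n => {p | ⌊f p.1 * 2 ^ n⌋ = ⌊f p.2 * 2 ^ n⌋} with hSdef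
  have hSU : ∀ n, S n = ⋃ k, A n k ×ˢ A n k := by
    intro n
    ext p
    simp only [hSdef, hAdef, mem_setOf_eq, mem_iUnion, mem_prod]
    exact ⟨fun h => ⟨⌊f p.2 * 2 ^ n⌋, h, rfl⟩, fun ⟨k, h1, h2⟩ => h1.trans h2.symm⟩
  have hSmeas : ∀ n, MeasurableSet (S n) := by
    intro n
    rw [hSU]
    exact MeasurableSet.iUnion fun k => (hAmeas n k).prod (hAmeas n k)
  have hSanti : Antitone S := by
    apply antitone_nat_of_succ_le
    intro n p hp
    have key : ∀ x : E, ⌊f x * 2 ^ n⌋ = ⌊f x * 2 ^ (n + 1)⌋ / 2 := by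
      intro x
      have : f x * 2 ^ n = f x * 2 ^ (n + 1) / 2 := by ring
      rw [this, floor_half_aux]
    show ⌊f p.1 * 2 ^ n⌋ = ⌊f p.2 * 2 ^ n⌋
    rw [key p.1, key p.2, hp]
  have hSinter : (⋂ n, S n) = {p : E × E | p.1 = p.2} := by
    ext p
    simp only [mem_iInter, hSdef, mem_setOf_eq]
    constructor
    · intro h
      apply hf.injective
      by_contra hne
      have hd : 0 < |f p.1 - f p.2| := abs_pos.mpr (sub_ne_zero.mpr hne)
      obtain ⟨n, hn⟩ := pow_unbounded_of_one_lt (1 / |f p.1 - f p.2|) (by norm_num : (1:ℝ) < 2)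
      have hb : ∀ m : ℕ, |f p.1 - f p.2| * 2 ^ m < 1 := by
        intro m
        have h1 := Int.floor_le (f p.1 * 2 ^ m)
        have h2 := Int.lt_floor_add_one (f p.1 * 2 ^ m)
        have h3 := Int.floor_le (f p.2 * 2 ^ m)
        have h4 := Int.lt_floor_add_one (f p.2 * 2 ^ m)
        rw [h m] at h1 h2
        have habs : |f p.1 - f p.2| * 2 ^ m = |f p.1 * 2 ^ m - f p.2 * 2 ^ m| := by
          rw [show f p.1 * 2 ^ m - f p.2 * 2 ^ m = (f p.1 - f p.2) * 2 ^ m by ring,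
            abs_mul, abs_of_pos (by positivity : (0:ℝ) < 2 ^ m)]
        rw [habs, abs_lt]
        constructor <;> linarith
      have := hb n
      rw [div_lt_iff₀ hd] at hn
      nlinarith
    · intro h
      rw [h]
      intro _
      rfl
  -- per-measure computation on S n
  have key : ∀ (μ : Measure E) (_ : IsProbabilityMeasure μ) (n : ℕ),
      μ.prod μ (S n) = ∑' k : ℤ, μ (A n k) * μ (A n k) := by
    intro μ hμ n
    rw [hSU]
    rw [measure_iUnion]
    · exact tsum_congr fun k => Measure.prod_prod _ _
    · intro k k' hkk'
      have := hAdisj n hkk'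
      rw [Function.onFun, Set.disjoint_left] at this ⊢
      rintro ⟨x, y⟩ ⟨hx, _⟩ ⟨hx', _⟩
      exact this hx hx'
    · exact fun k => (hAmeas n k).prod (hAmeas n k)
  have hqA : ∀ n k, Measurable fun ω => q ω (A n k) :=
    fun n k => Measure.measurable_measure.mp hq _ (hAmeas n k)
  -- sum of Q over partition is 1
  have hQsum : ∀ n, ∑' k : ℤ, Q (A n k) = 1 := by
    intro n
    rw [← measure_iUnion (hAdisj n) (hAmeas n), hAcover, measure_univ]
  -- moment identity for each n
  have hI : ∀ n, ∫⁻ ω, (q ω).prod (q ω) (S n) ∂ℙ = π₁ + (1 - π₁) * Q.prod Q (S n) := by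
    intro n
    calc ∫⁻ ω, (q ω).prod (q ω) (S n) ∂ℙ
        = ∫⁻ ω, ∑' k : ℤ, q ω (A n k) * q ω (A n k) ∂ℙ :=
          lintegral_congr fun ω => key (q ω) (hqprob ω) n
      _ = ∑' k : ℤ, ∫⁻ ω, q ω (A n k) * q ω (A n k) ∂ℙ :=
          lintegral_tsum fun k => ((hqA n k).mul (hqA n k)).aemeasurable
      _ = ∑' k : ℤ, (π₁ * Q (A n k) + (1 - π₁) * (Q (A n k) * Q (A n k))) := by
          refine tsum_congr fun k => ?_
          rw [hmom _ _ (hAmeas n k) (hAmeas n k), inter_self]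
      _ = π₁ * ∑' k : ℤ, Q (A n k) + (1 - π₁) * ∑' k : ℤ, Q (A n k) * Q (A n k) := by
          rw [ENNReal.tsum_add, ENNReal.tsum_mul_left, ENNReal.tsum_mul_left]
      _ = π₁ + (1 - π₁) * Q.prod Q (S n) := by
          rw [hQsum n, mul_one, key Q inferInstance n]
  -- limit of LHS
  have hLHS : Tendsto (fun n => ∫⁻ ω, (q ω).prod (q ω) (S n) ∂ℙ) atTop
      (𝓝 (∫⁻ ω, (q ω).prod (q ω) (⋂ m, S m) ∂ℙ)) := by
    refine tendsto_lintegral_of_dominated_convergence (fun _ => 1) ?_ ?_ ?_ ?_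
    · intro n
      have heq : (fun ω => (q ω).prod (q ω) (S n)) =
          fun ω => ∑' k : ℤ, q ω (A n k) * q ω (A n k) :=
        funext fun ω => key (q ω) (hqprob ω) n
      rw [heq]
      exact Measurable.ennreal_tsum fun k => (hqA n k).mul (hqA n k)
    · intro n
      refine Filter.Eventually.of_forall fun ω => ?_
      have : IsProbabilityMeasure ((q ω).prod (q ω)) := by
        have := hqprob ω; infer_instance
      exact prob_le_one
    · simp
    · refine Filter.Eventually.of_forall fun ω => ?_
      have : IsProbabilityMeasure ((q ω).prod (q ω)) := by
        have := hqprob ω; infer_instance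
      exact tendsto_measure_iInter_atTop
        (fun n => (hSmeas n).nullMeasurableSet) hSanti ⟨0, measure_ne_top _ _⟩
  -- limit of RHS
  have hQ0 : Q.prod Q (⋂ m, S m) = 0 := by
    rw [hSinter, Measure.prod_apply (hSinter ▸ MeasurableSet.iInter hSmeas)]
    have hpre : ∀ x : E, Prod.mk x ⁻¹' {p : E × E | p.1 = p.2} = {x} := by
      intro x; ext y; simp [eq_comm]
    simp only [hpre, measure_singleton]
    exact lintegral_zero
  have hQt : Tendsto (fun n => Q.prod Q (S n)) atTop (𝓝 0) := by
    have := tendsto_measure_iInter_atTop (μ := Q.prod Q)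
      (fun n => (hSmeas n).nullMeasurableSet) hSanti ⟨0, measure_ne_top _ _⟩
    rwa [hQ0] at this
  have hRHS : Tendsto (fun n => π₁ + (1 - π₁) * Q.prod Q (S n)) atTop (𝓝 π₁) := by
    have h1 : Tendsto (fun n => (1 - π₁) * Q.prod Q (S n)) atTop (𝓝 ((1 - π₁) * 0)) :=
      ENNReal.Tendsto.const_mul hQt (Or.inr (by
        exact ne_top_of_le_ne_top ENNReal.one_ne_top tsub_le_self))
    have := tendsto_const_nhds (x := π₁) (f := atTop (α := ℕ)) |>.add h1
    simpa using this
  -- conclude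
  have hfinal : ∫⁻ ω, (q ω).prod (q ω) (⋂ m, S m) ∂ℙ = π₁ := by
    refine tendsto_nhds_unique ?_ hRHS
    have heq : (fun n => ∫⁻ ω, (q ω).prod (q ω) (S n) ∂ℙ) =
        fun n => π₁ + (1 - π₁) * Q.prod Q (S n) := funext hI
    rwa [heq] at hLHS
  rw [← hSinter]
  exact hfinal
end

section
/- Let (Ω, 𝒜, ℙ) be a probability space and X a measurable space in which all singletons are measurable. Let θ_j : Ω → X (j ∈ ℕ) be measurable maps such that the distribution of each θ_j is an atomless measure on X, and let ω_j : Ω → [0, ∞) (j ∈ ℕ) be measurable with Σ_{j∈ℕ} ω_j(o) = 1 for ℙ-almost every o ∈ Ω. Then for every fixed measure p on X, the set {o ∈ Ω : Σ_{j∈ℕ} ω_j(o) · δ_{θ_j(o)} = p} is a ℙ-null set (i.e., it is contained in a measurable set of ℙ-measure zero). -/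
open MeasureTheory Set
open scoped ENNReal NNReal

/-- Key lemma in the proof of Proposition 1: a random discrete probability measure
`Σ_j ω_j δ_{θ_j}` whose atom locations `θ_j` have atomless laws equals any fixed
measure `p` with probability zero. -/
theorem random_discrete_measure_ne_fixed
    {Ω : Type*} [MeasurableSpace Ω] (ℙ : Measure Ω) [IsProbabilityMeasure ℙ]
    {X : Type*} [MeasurableSpace X] [MeasurableSingletonClass X]
    (θ : ℕ → Ω → X) (hθ : ∀ j, Measurable (θ j))
    (hatomless : ∀ j, ∀ x : X, ℙ.map (θ j) {x} = 0)
    (w : ℕ → Ω → ℝ≥0) (hw : ∀ j, Measurable (w j))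
    (hsum : ∀ᵐ o ∂ℙ, ∑' j, w j o = 1)
    (p : Measure X) :
    ℙ {o : Ω | Measure.sum (fun j => (w j o : ℝ≥0∞) • Measure.dirac (θ j o)) = p}
      = 0 := by
  set S := {o : Ω | Measure.sum (fun j => (w j o : ℝ≥0∞) • Measure.dirac (θ j o)) = p}
  set B := {o : Ω | ¬ (∑' j, w j o = 1)}
  have hB : ℙ B = 0 := hsum
  -- the set of atoms of p
  set A := {x : X | 0 < p {x}} with hA
  -- S ⊆ B ∪ ⋃ j, θ j ⁻¹' A
  have hsub : S ⊆ B ∪ ⋃ j, θ j ⁻¹' A := by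
    intro o ho
    by_cases h1 : ∑' j, w j o = 1
    · right
      -- some weight positive
      have : ∃ j, w j o ≠ 0 := by
        by_contra h
        push_neg at h
        simp [h] at h1
      obtain ⟨j, hj⟩ := this
      refine mem_iUnion.mpr ⟨j, ?_⟩
      have hp : p {θ j o} = ∑' i, (w i o : ℝ≥0∞) • Measure.dirac (θ i o) {θ j o} := by
        rw [← ho]
        simp [Measure.sum_apply _ (MeasurableSet.singleton _)]
        rfl
      have hle : (w j o : ℝ≥0∞) ≤ p {θ j o} := by
        rw [hp]
        refine le_trans ?_ (ENNReal.le_tsum j)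
        simp [Measure.dirac_apply' _ (MeasurableSet.singleton (θ j o))]
      have : 0 < p {θ j o} :=
        lt_of_lt_of_le (by simpa using ENNReal.coe_pos.mpr (pos_iff_ne_zero.mpr hj)) hle
      exact this
    · left; exact h1
  -- if S nonempty with sum condition, p is a probability measure, hence A countable
  by_cases hne : ∃ o ∈ S, ∑' j, w j o = 1
  · obtain ⟨o₀, ho₀, h1⟩ := hne
    have hpfin : p univ = 1 := by
      rw [← ho₀]
      have hs : Summable fun i => w i o₀ := by
        by_contra h
        rw [tsum_eq_zero_of_not_summable h] at h1
        simp at h1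
      simp only [Measure.sum_apply _ MeasurableSet.univ]
      simp [← ENNReal.coe_tsum hs, h1]
    have hAc : A.Countable := by
      have := Measure.countable_meas_pos_of_disjoint_of_meas_iUnion_ne_top
        (μ := p) (As := fun x : X => {x})
        (fun x => MeasurableSet.singleton x)
        (fun x y hxy => by simpa using hxy)
        (by
          refine ne_top_of_le_ne_top ?_ (measure_mono (subset_univ _))
          rw [hpfin]; exact ENNReal.one_ne_top)
      exact this
    have hAm : MeasurableSet A := hAc.measurableSet
    -- each preimage is null
    have hnull : ∀ j, ℙ (θ j ⁻¹' A) = 0 := by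
      intro j
      have : ℙ.map (θ j) A = 0 := by
        have : A = ⋃ x ∈ A, {x} := by simp
        rw [this]
        exact (measure_biUnion_null_iff hAc).mpr fun x _ => hatomless j x
      rwa [Measure.map_apply (hθ j) hAm] at this
    refine measure_mono_null hsub ?_
    refine measure_union_null hB ?_
    exact measure_iUnion_null hnull
  · -- S ⊆ B
    push_neg at hne
    refine measure_mono_null (fun o ho => hne o ho) hB
end

section
/- Let σ₀ ∈ (0, 1), γ ≥ 0, h₁ > 0, h₂ > 0 and k > 0 be real numbers. Then ∫₀^∞ ∫₀^∞ u^{h₁−1} v^{h₂−1} (u+v)^{kσ₀ − h₁ − h₂} exp(−γ(u+v)^{σ₀} − u^{σ₀} − v^{σ₀}) du dv = (Γ(k)/σ₀) ∫₀^1 w^{h₁−1} (1−w)^{h₂−1} [γ + w^{σ₀} + (1−w)^{σ₀}]^{−k} dw, where Γ denotes the Gamma function. -/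
open MeasureTheory Set Real

lemma myIntOn {p s b : ℝ} (hp : 0 < p) (hs : -1 < s) (hb : 0 < b) :
    IntegrableOn (fun x : ℝ => x ^ s * Real.exp (-(b * x ^ p))) (Ioi 0) := by
  have h1 : IntegrableOn (fun y : ℝ => y ^ ((s + 1) / p - 1) * Real.exp (-b * y)) (Ioi 0) := by
    have := integrableOn_rpow_mul_exp_neg_mul_rpow (p := 1) (s := (s + 1) / p - 1)
      (by have : 0 < (s + 1) / p := div_pos (by linarith) hp; linarith) one_pos hb
    refine this.congr_fun (fun x hx => ?_) measurableSet_Ioi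
    beta_reduce
    rw [Real.rpow_one]
  have h2 := (integrableOn_Ioi_comp_rpow_iff'
    (fun y : ℝ => y ^ ((s + 1) / p - 1) * Real.exp (-b * y)) hp.ne').mpr h1
  refine h2.congr_fun (fun x hx => ?_) measurableSet_Ioi
  have hx0 : (0:ℝ) < x := hx
  beta_reduce
  rw [smul_eq_mul, ← Real.rpow_mul hx0.le, ← mul_assoc, ← Real.rpow_add hx0]
  rw [neg_mul]
  congr 2
  field_simp
  ring

lemma betaHalf {a b : ℝ} (ha : 0 < a) :
    IntervalIntegrable (fun x : ℝ => x ^ (a - 1) * (1 - x) ^ (b - 1)) volume 0 (1/2) := by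
  apply IntervalIntegrable.mul_continuousOn
  · exact intervalIntegral.intervalIntegrable_rpow' (by linarith)
  · apply ContinuousOn.rpow_const
    · exact (continuous_const.sub continuous_id).continuousOn
    · intro x hx
      rw [uIcc_of_le (by norm_num : (0:ℝ) ≤ 1/2)] at hx
      refine Or.inl (sub_ne_zero.mpr ?_); intro h; rw [h] at hx; linarith [hx.2]

lemma betaIntOn {a b : ℝ} (ha : 0 < a) (hb : 0 < b) :
    IntegrableOn (fun x : ℝ => x ^ (a - 1) * (1 - x) ^ (b - 1)) (Ioo (0:ℝ) 1) := by
  have hL := betaHalf (b := b) ha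
  have hR : IntervalIntegrable (fun x : ℝ => x ^ (a - 1) * (1 - x) ^ (b - 1)) volume (1/2) 1 := by
    have h := (betaHalf (b := a) hb).comp_sub_left 1
    norm_num at h
    have h2 := h.symm
    apply h2.congr
    intro x _
    show (1 - x) ^ (b - 1) * x ^ (a - 1) = x ^ (a - 1) * (1 - x) ^ (b - 1)
    ring
  have h01 : IntervalIntegrable (fun x : ℝ => x ^ (a - 1) * (1 - x) ^ (b - 1)) volume 0 1 :=
    hL.trans hR
  rwa [intervalIntegrable_iff_integrableOn_Ioo_of_le (by norm_num)] at h01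

lemma mderiv : ∀ w ∈ Ioo (0:ℝ) 1,
    HasDerivWithinAt (fun w : ℝ => w / (1 - w)) (((1 - w) ^ 2)⁻¹) (Ioo (0:ℝ) 1) w := by
  intro w hw
  have hc : (0:ℝ) < 1 - w := by linarith [hw.2]
  have h := (hasDerivAt_id w).div ((hasDerivAt_id w).const_sub 1) hc.ne'
  simp only [id_eq, one_mul, mul_neg, mul_one, sub_neg_eq_add] at h
  have heq : (1 - w + w) / (1 - w) ^ 2 = ((1 - w) ^ 2)⁻¹ := by
    field_simp
    ring
  rw [heq] at h
  exact h.hasDerivWithinAt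

lemma minj : InjOn (fun w : ℝ => w / (1 - w)) (Ioo (0:ℝ) 1) := by
  intro x hx y hy h
  have hx2 : (0:ℝ) < 1 - x := by linarith [hx.2]
  have hy2 : (0:ℝ) < 1 - y := by linarith [hy.2]
  simp only at h
  rw [div_eq_div_iff hx2.ne' hy2.ne'] at h
  nlinarith

lemma mimg : (fun w : ℝ => w / (1 - w)) '' (Ioo (0:ℝ) 1) = Ioi (0:ℝ) := by
  ext t
  constructor
  · rintro ⟨w, hw, rfl⟩
    exact div_pos hw.1 (by linarith [hw.2])
  · intro ht
    have ht' : (0:ℝ) < t := ht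
    have h1 : (0:ℝ) < 1 + t := by linarith
    refine ⟨t / (1 + t), ⟨div_pos ht' h1, ?_⟩, ?_⟩
    · rw [div_lt_one h1]; linarith
    · show t / (1 + t) / (1 - t / (1 + t)) = t
      field_simp
      ring

lemma mpoint (σ₀ γ h₁ h₂ k : ℝ) (hγ : 0 ≤ γ) {w : ℝ} (hw : w ∈ Ioo (0:ℝ) 1) :
    |((1 - w) ^ 2)⁻¹| * ((w / (1 - w)) ^ (h₁ - 1) * (w / (1 - w) + 1) ^ (k * σ₀ - h₁ - h₂) *
        (γ * (w / (1 - w) + 1) ^ σ₀ + (w / (1 - w)) ^ σ₀ + 1) ^ (-k))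
      = w ^ (h₁ - 1) * (1 - w) ^ (h₂ - 1) * (γ + w ^ σ₀ + (1 - w) ^ σ₀) ^ (-k) := by
  obtain ⟨hw0, hw1⟩ := hw
  set c : ℝ := 1 - w with hc
  have hc0 : (0:ℝ) < c := by simp [hc]; linarith
  set a : ℝ := k * σ₀ - h₁ - h₂ with ha
  set D : ℝ := γ + w ^ σ₀ + c ^ σ₀ with hD
  have hD0 : 0 ≤ D := by
    have h1 := rpow_nonneg hw0.le σ₀
    have h2 := rpow_nonneg hc0.le σ₀
    simp only [hD]; linarith
  have e1 : w / c + 1 = c⁻¹ := by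
    field_simp
    linarith
  have e2 : (w / c) ^ (h₁ - 1) = w ^ (h₁ - 1) * c ^ (-(h₁ - 1)) := by
    rw [div_rpow hw0.le hc0.le, div_eq_mul_inv, rpow_neg hc0.le]
  have e3 : (w / c + 1) ^ a = c ^ (-a) := by
    rw [e1, ← rpow_neg_one c, ← rpow_mul hc0.le]
    ring_nf
  have e2' : (w / c) ^ σ₀ = w ^ σ₀ * c ^ (-σ₀) := by
    rw [div_rpow hw0.le hc0.le, div_eq_mul_inv, rpow_neg hc0.le]
  have e3' : (w / c + 1) ^ σ₀ = c ^ (-σ₀) := by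
    rw [e1, ← rpow_neg_one c, ← rpow_mul hc0.le]
    ring_nf
  have ecc : c ^ (-σ₀) * c ^ σ₀ = 1 := by
    rw [← rpow_add hc0]; simp
  have e4 : γ * (w / c + 1) ^ σ₀ + (w / c) ^ σ₀ + 1 = c ^ (-σ₀) * D := by
    rw [e2', e3', hD]
    rw [mul_add, mul_add, ecc]
    ring
  have e5 : (c ^ (-σ₀) * D) ^ (-k) = c ^ (σ₀ * k) * D ^ (-k) := by
    rw [mul_rpow (rpow_nonneg hc0.le _) hD0, ← rpow_mul hc0.le]
    ring_nf
  have e6 : |((c : ℝ) ^ (2:ℕ))⁻¹| = c ^ (-2 : ℝ) := by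
    rw [abs_of_nonneg (by positivity), show ((-2):ℝ) = -((2:ℕ):ℝ) by norm_num,
      rpow_neg hc0.le, rpow_natCast]
  rw [e2, e3, e4, e5, e6]
  have e7 : c ^ (-2:ℝ) * c ^ (-(h₁ - 1)) * c ^ (-a) * c ^ (σ₀ * k) = c ^ (h₂ - 1) := by
    rw [← rpow_add hc0, ← rpow_add hc0, ← rpow_add hc0]
    congr 1
    simp only [ha]; ring
  calc c ^ (-2:ℝ) * (w ^ (h₁-1) * c ^ (-(h₁-1)) * c ^ (-a) * (c ^ (σ₀ * k) * D ^ (-k)))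
      = (c ^ (-2:ℝ) * c ^ (-(h₁ - 1)) * c ^ (-a) * c ^ (σ₀ * k)) * (w ^ (h₁-1) * D ^ (-k)) := by
        ring
    _ = w ^ (h₁-1) * c ^ (h₂-1) * D ^ (-k) := by rw [e7]; ring

lemma inner_transform (σ₀ γ h₁ h₂ k : ℝ) {v : ℝ} (hv : 0 < v) :
    ∫ u in Ioi (0:ℝ), u ^ (h₁ - 1) * v ^ (h₂ - 1) * (u + v) ^ (k * σ₀ - h₁ - h₂) *
        Real.exp (-(γ * (u + v) ^ σ₀) - u ^ σ₀ - v ^ σ₀)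
      = ∫ t in Ioi (0:ℝ), (t ^ (h₁ - 1) * (t + 1) ^ (k * σ₀ - h₁ - h₂)) *
          (v ^ (k * σ₀ - 1) *
            Real.exp (-((γ * (t + 1) ^ σ₀ + t ^ σ₀ + 1) * v ^ σ₀))) := by
  set a : ℝ := k * σ₀ - h₁ - h₂ with ha
  set F : ℝ → ℝ := fun u => u ^ (h₁ - 1) * v ^ (h₂ - 1) * (u + v) ^ a *
      Real.exp (-(γ * (u + v) ^ σ₀) - u ^ σ₀ - v ^ σ₀) with hF
  have h := integral_comp_mul_right_Ioi F 0 hv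
  rw [zero_mul] at h
  have h2 : ∫ u in Ioi (0:ℝ), F u = v • ∫ t in Ioi (0:ℝ), F (t * v) := by
    rw [h, smul_smul, mul_inv_cancel₀ hv.ne', one_smul]
  rw [h2, ← integral_smul]
  refine setIntegral_congr_fun measurableSet_Ioi (fun t ht => ?_)
  have ht0 : (0:ℝ) < t := ht
  have f1 : t * v + v = (t + 1) * v := by ring
  simp only [hF, smul_eq_mul, f1]
  rw [mul_rpow ht0.le hv.le, mul_rpow (by positivity : (0:ℝ) ≤ t + 1) hv.le,
    mul_rpow ht0.le hv.le, mul_rpow (by positivity : (0:ℝ) ≤ t + 1) hv.le]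
  have eexp : -(γ * ((t+1) ^ σ₀ * v ^ σ₀)) - t ^ σ₀ * v ^ σ₀ - v ^ σ₀
      = -((γ * (t + 1) ^ σ₀ + t ^ σ₀ + 1) * v ^ σ₀) := by ring
  rw [eexp]
  have epow : v * (v ^ (h₁ - 1) * (v ^ (h₂ - 1) * v ^ a)) = v ^ (k * σ₀ - 1) := by
    nth_rewrite 1 [← Real.rpow_one v]
    rw [← rpow_add hv, ← rpow_add hv, ← rpow_add hv]
    congr 1
    simp only [ha]; ring
  calc v * (t ^ (h₁-1) * v ^ (h₁-1) * v ^ (h₂-1) * ((t+1) ^ a * v ^ a) *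
        Real.exp (-((γ * (t + 1) ^ σ₀ + t ^ σ₀ + 1) * v ^ σ₀)))
      = (t ^ (h₁-1) * (t+1) ^ a) * ((v * (v ^ (h₁-1) * (v ^ (h₂-1) * v ^ a))) *
        Real.exp (-((γ * (t + 1) ^ σ₀ + t ^ σ₀ + 1) * v ^ σ₀))) := by ring
    _ = _ := by rw [epow]

lemma vint {σ₀ k b : ℝ} (hσp : 0 < σ₀) (hk : 0 < k) (hb : 0 < b) :
    ∫ v in Ioi (0:ℝ), v ^ (k * σ₀ - 1) * Real.exp (-(b * v ^ σ₀))
      = Real.Gamma k / σ₀ * b ^ (-k) := by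
  have hq : (-1:ℝ) < k * σ₀ - 1 := by nlinarith
  have h := integral_rpow_mul_exp_neg_mul_rpow hσp hq hb
  simp_rw [neg_mul] at h
  rw [h]
  have e1 : (k * σ₀ - 1 + 1) / σ₀ = k := by field_simp; ring
  rw [e1, show -(k * σ₀ - 1 + 1) / σ₀ = -k by field_simp; ring]
  ring

/-- The double Laplace-type integral of the heterogeneous component `I₂` of the
latent nested σ-stable pEPPF reduces to `(Γ(k)/σ₀) · J_{σ₀,γ}(h₁,h₂;k)`:
`∫₀^∞ ∫₀^∞ u^{h₁−1} v^{h₂−1} (u+v)^{kσ₀−h₁−h₂} e^{−γ(u+v)^{σ₀} − u^{σ₀} − v^{σ₀}} du dv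
  = (Γ(k)/σ₀) ∫₀^1 w^{h₁−1} (1−w)^{h₂−1} [γ + w^{σ₀} + (1−w)^{σ₀}]^{−k} dw`. -/
theorem latent_stable_double_integral (σ₀ γ h₁ h₂ k : ℝ)
    (hσ₀ : σ₀ ∈ Set.Ioo (0 : ℝ) 1) (hγ : 0 ≤ γ)
    (hh₁ : 0 < h₁) (hh₂ : 0 < h₂) (hk : 0 < k) :
    ∫ v in Ioi (0 : ℝ), ∫ u in Ioi (0 : ℝ),
        u ^ (h₁ - 1) * v ^ (h₂ - 1) * (u + v) ^ (k * σ₀ - h₁ - h₂) *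
          Real.exp (-(γ * (u + v) ^ σ₀) - u ^ σ₀ - v ^ σ₀)
      = (Real.Gamma k / σ₀) *
          ∫ w in Ioo (0 : ℝ) 1,
            w ^ (h₁ - 1) * (1 - w) ^ (h₂ - 1) *
              (γ + w ^ σ₀ + (1 - w) ^ σ₀) ^ (-k) := by
  obtain ⟨hσp, hσ1⟩ := hσ₀
  set A : ℝ → ℝ := fun t => t ^ (h₁ - 1) * (t + 1) ^ (k * σ₀ - h₁ - h₂) with hA
  set C : ℝ → ℝ := fun t => γ * (t + 1) ^ σ₀ + t ^ σ₀ + 1 with hC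
  set G : ℝ → ℝ → ℝ := fun v t =>
    A t * (v ^ (k * σ₀ - 1) * Real.exp (-(C t * v ^ σ₀))) with hG
  have hCt : ∀ t : ℝ, 0 < t → 1 ≤ C t := by
    intro t ht
    have h1 : (0:ℝ) ≤ γ * (t + 1) ^ σ₀ := mul_nonneg hγ (rpow_nonneg (by linarith) _)
    have h2 : (0:ℝ) ≤ t ^ σ₀ := rpow_nonneg ht.le _
    simp only [hC]; linarith
  have hCt0 : ∀ t : ℝ, 0 < t → 0 < C t := fun t ht => lt_of_lt_of_le one_pos (hCt t ht)
  have hApos : ∀ t : ℝ, 0 < t → 0 ≤ A t := fun t ht =>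
    mul_nonneg (rpow_nonneg ht.le _) (rpow_nonneg (by linarith) _)
  have hq : (-1:ℝ) < k * σ₀ - 1 := by nlinarith
  -- measurability
  have hmeas : Measurable (Function.uncurry G) := by
    have : Function.uncurry G = fun p : ℝ × ℝ =>
        (p.2 ^ (h₁ - 1) * (p.2 + 1) ^ (k * σ₀ - h₁ - h₂)) *
          (p.1 ^ (k * σ₀ - 1) *
            Real.exp (-((γ * (p.2 + 1) ^ σ₀ + p.2 ^ σ₀ + 1) * p.1 ^ σ₀))) := rfl
    rw [this]
    fun_prop
  -- value of the inner v-integral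
  have key : ∀ t ∈ Ioi (0:ℝ),
      (∫ v in Ioi (0:ℝ), G v t) = Real.Gamma k / σ₀ * (A t * C t ^ (-k)) := by
    intro t ht
    have ht0 : (0:ℝ) < t := ht
    simp only [hG]
    rw [MeasureTheory.integral_const_mul, vint hσp hk (hCt0 t ht0)]
    ring
  have hIntV : ∀ t ∈ Ioi (0:ℝ), Integrable (fun v => G v t) (volume.restrict (Ioi 0)) := by
    intro t ht
    exact (myIntOn hσp hq (hCt0 t ht)).const_mul (A t)
  have hnorm : ∀ t ∈ Ioi (0:ℝ),
      (∫ v in Ioi (0:ℝ), ‖G v t‖) = Real.Gamma k / σ₀ * (A t * C t ^ (-k)) := by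
    intro t ht
    rw [← key t ht]
    refine integral_congr_ae ?_
    filter_upwards [ae_restrict_mem measurableSet_Ioi] with v hv
    have hv0 : (0:ℝ) < v := hv
    have hGnn : 0 ≤ G v t :=
      mul_nonneg (hApos t ht) (mul_nonneg (rpow_nonneg hv0.le _) (Real.exp_pos _).le)
    rw [Real.norm_eq_abs, abs_of_nonneg hGnn]
  -- integrability of the beta-type integrand
  have hBint : IntegrableOn (fun w : ℝ => w ^ (h₁ - 1) * (1 - w) ^ (h₂ - 1) *
      (γ + w ^ σ₀ + (1 - w) ^ σ₀) ^ (-k)) (Ioo (0:ℝ) 1) := by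
    refine Integrable.mono (betaIntOn hh₁ hh₂) (Measurable.aestronglyMeasurable (by fun_prop)) ?_
    filter_upwards [ae_restrict_mem measurableSet_Ioo] with w hw
    obtain ⟨hw0, hw1⟩ := hw
    have hcw : (0:ℝ) < 1 - w := by linarith
    have hb1 : 1 ≤ γ + w ^ σ₀ + (1 - w) ^ σ₀ := by
      have h1 : w ^ (1:ℝ) ≤ w ^ σ₀ :=
        rpow_le_rpow_of_exponent_ge hw0 hw1.le hσ1.le
      have h2 : (1 - w) ^ (1:ℝ) ≤ (1 - w) ^ σ₀ :=
        rpow_le_rpow_of_exponent_ge hcw (by linarith) hσ1.le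
      rw [rpow_one] at h1 h2
      linarith
    have h3 : (γ + w ^ σ₀ + (1 - w) ^ σ₀) ^ (-k) ≤ 1 :=
      rpow_le_one_of_one_le_of_nonpos hb1 (by linarith)
    have hbeta_nn : (0:ℝ) ≤ w ^ (h₁ - 1) * (1 - w) ^ (h₂ - 1) :=
      mul_nonneg (rpow_nonneg hw0.le _) (rpow_nonneg hcw.le _)
    have hbr_nn : (0:ℝ) ≤ (γ + w ^ σ₀ + (1 - w) ^ σ₀) ^ (-k) := rpow_nonneg (by linarith) _
    rw [Real.norm_eq_abs, Real.norm_eq_abs, abs_of_nonneg (mul_nonneg hbeta_nn hbr_nn),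
      abs_of_nonneg hbeta_nn]
    calc w ^ (h₁-1) * (1-w) ^ (h₂-1) * (γ + w ^ σ₀ + (1-w) ^ σ₀) ^ (-k)
        ≤ w ^ (h₁-1) * (1-w) ^ (h₂-1) * 1 := by
          exact mul_le_mul_of_nonneg_left h3 hbeta_nn
      _ = w ^ (h₁-1) * (1-w) ^ (h₂-1) := by ring
  -- change of variables t = w/(1-w)
  have hsub : ∫ t in Ioi (0:ℝ), A t * C t ^ (-k)
      = ∫ w in Ioo (0:ℝ) 1, w ^ (h₁ - 1) * (1 - w) ^ (h₂ - 1) *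
          (γ + w ^ σ₀ + (1 - w) ^ σ₀) ^ (-k) := by
    rw [← mimg, integral_image_eq_integral_abs_deriv_smul measurableSet_Ioo mderiv minj]
    refine setIntegral_congr_fun measurableSet_Ioo (fun w hw => ?_)
    rw [smul_eq_mul]
    exact mpoint σ₀ γ h₁ h₂ k hγ hw
  have hφint : IntegrableOn (fun t => A t * C t ^ (-k)) (Ioi (0:ℝ)) := by
    rw [← mimg, integrableOn_image_iff_integrableOn_abs_deriv_smul measurableSet_Ioo mderiv minj]
    refine hBint.congr_fun (fun w hw => ?_) measurableSet_Ioo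
    rw [smul_eq_mul]
    exact (mpoint σ₀ γ h₁ h₂ k hγ hw).symm
  -- Fubini
  have hFub : Integrable (Function.uncurry G)
      ((volume.restrict (Ioi (0:ℝ))).prod (volume.restrict (Ioi (0:ℝ)))) := by
    rw [integrable_prod_iff' hmeas.aestronglyMeasurable]
    constructor
    · filter_upwards [ae_restrict_mem measurableSet_Ioi] with t ht
      exact hIntV t ht
    · refine Integrable.congr (hφint.const_mul (Real.Gamma k / σ₀)) ?_
      filter_upwards [ae_restrict_mem measurableSet_Ioi] with t ht
      exact (hnorm t ht).symm
  calc ∫ v in Ioi (0:ℝ), ∫ u in Ioi (0:ℝ),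
        u ^ (h₁ - 1) * v ^ (h₂ - 1) * (u + v) ^ (k * σ₀ - h₁ - h₂) *
          Real.exp (-(γ * (u + v) ^ σ₀) - u ^ σ₀ - v ^ σ₀)
      = ∫ v in Ioi (0:ℝ), ∫ t in Ioi (0:ℝ), G v t := by
        refine setIntegral_congr_fun measurableSet_Ioi (fun v hv => ?_)
        exact inner_transform σ₀ γ h₁ h₂ k hv
    _ = ∫ t in Ioi (0:ℝ), ∫ v in Ioi (0:ℝ), G v t := integral_integral_swap hFub
    _ = ∫ t in Ioi (0:ℝ), Real.Gamma k / σ₀ * (A t * C t ^ (-k)) :=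
        setIntegral_congr_fun measurableSet_Ioi key
    _ = Real.Gamma k / σ₀ * ∫ t in Ioi (0:ℝ), A t * C t ^ (-k) :=
        MeasureTheory.integral_const_mul _ _
    _ = _ := by rw [hsub]
end
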